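/- arXiv:1602.02377 — 2 statements merged into one kernel-verified Lean document; each statement's English description precedes it below -/
import Mathlib

section
/- Bellman–Ford-style global relaxation fixed point characterizes true shortest weighted distances: let G be a finite positively-weighted graph with source s, and let w : V → ℝ≥0 ∪ {∞} satisfy w(s) = 0 and, for every non-source vertex u reachable from s, w(u) = min over in-neighbors x of u of (w(x) + weight(x,u)), with w(u) = ∞ for unreachable u. Then w(u) equals the minimum total weight over all paths from s to u, for every u. -/
/-- The total weight of a directed walk `s :: l` (consecutive vertices joined by
arcs), as an element of `ℝ≥0∞`. -/
noncomputable def dwalkWeight {V : Type*} (weight : V → V → ENNReal) (s : V) (l : List V) :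
    ENNReal :=
  (((s :: l).zip l).map fun p => weight p.1 p.2).sum

lemma dwalkWeight_nil {V : Type*} (w : V → V → ENNReal) (s : V) :
    dwalkWeight w s [] = 0 := by simp [dwalkWeight]

lemma dwalkWeight_cons {V : Type*} (w : V → V → ENNReal) (s u : V) (l : List V) :
    dwalkWeight w s (u :: l) = w s u + dwalkWeight w u l := by
  simp [dwalkWeight]

lemma dwalkWeight_append_single {V : Type*} (w : V → V → ENNReal) (v : V) :
    ∀ (l : List V) (a : V), dwalkWeight w a (l ++ [v]) =
      dwalkWeight w a l + w ((a :: l).getLast (List.cons_ne_nil a l)) v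
  | [], a => by simp [dwalkWeight_nil, dwalkWeight_cons]
  | b :: l, a => by
      rw [List.cons_append, dwalkWeight_cons, dwalkWeight_append_single w v l b,
        dwalkWeight_cons, List.getLast_cons (List.cons_ne_nil b l)]
      ring

lemma chain'_last_reach {V : Type*} (Adj : V → V → Prop) :
    ∀ (l : List V) (a : V), List.Chain' Adj (a :: l) →
      Relation.ReflTransGen Adj a ((a :: l).getLast (List.cons_ne_nil a l))
  | [], a, _ => by simpa using Relation.ReflTransGen.refl
  | b :: l, a, h => by
      rw [List.getLast_cons (List.cons_ne_nil b l)]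
      have h1 : Adj a b := (List.isChain_cons_cons.mp h).1
      have h2 := chain'_last_reach Adj l b (List.isChain_cons_cons.mp h).2
      exact Relation.ReflTransGen.head h1 h2

/-- Bellman–Ford fixed point: in a finite directed graph with strictly positive
edge weights, if `d s = 0`, `d u = ⊤` for `u` unreachable from `s`, and for
every reachable `u ≠ s` the value `d u` equals the infimum of `d x + weight x u`
over in-neighbours `x` of `u`, then `d u` is the minimum total weight over all
directed walks from `s` to `u`, for every `u`. -/
theorem relaxation_fixed_point_is_shortest
    {V : Type*} [Fintype V] (Adj : V → V → Prop) (weight : V → V → ENNReal)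
    (hw : ∀ a b, Adj a b → 0 < weight a b ∧ weight a b ≠ ⊤)
    (s : V) (d : V → ENNReal)
    (hds : d s = 0)
    (hfix : ∀ u, u ≠ s → Relation.ReflTransGen Adj s u →
      d u = sInf {y | ∃ x, Adj x u ∧ y = d x + weight x u})
    (hinf : ∀ u, ¬ Relation.ReflTransGen Adj s u → d u = ⊤) :
    ∀ u, d u = sInf {y | ∃ l : List V, List.Chain' Adj (s :: l) ∧
      (s :: l).getLast (List.cons_ne_nil s l) = u ∧ y = dwalkWeight weight s l} := by
  classical
  set W : V → Set ENNReal := fun u => {y | ∃ l : List V, List.Chain' Adj (s :: l) ∧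
      (s :: l).getLast (List.cons_ne_nil s l) = u ∧ y = dwalkWeight weight s l} with hW
  -- Lemma A: d of the endpoint of any chain is at most d of start + walk weight
  have lemA : ∀ (l : List V) (a : V), Relation.ReflTransGen Adj s a →
      List.Chain' Adj (a :: l) →
      d ((a :: l).getLast (List.cons_ne_nil a l)) ≤ d a + dwalkWeight weight a l := by
    intro l
    induction l with
    | nil => intro a _ _; simp [dwalkWeight_nil]
    | cons b l ih =>
      intro a ha hc
      have h1 : Adj a b := (List.isChain_cons_cons.mp hc).1
      have hb : Relation.ReflTransGen Adj s b := ha.tail h1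
      have hdb : d b ≤ d a + weight a b := by
        by_cases hbs : b = s
        · subst hbs; simp [hds]
        · rw [hfix b hbs hb]
          exact sInf_le ⟨a, h1, rfl⟩
      rw [List.getLast_cons (List.cons_ne_nil b l), dwalkWeight_cons]
      calc d ((b :: l).getLast (List.cons_ne_nil b l)) ≤ d b + dwalkWeight weight b l :=
            ih b hb (List.isChain_cons_cons.mp hc).2
        _ ≤ (d a + weight a b) + dwalkWeight weight b l := by gcongr
        _ = d a + (weight a b + dwalkWeight weight b l) := by ring
  -- the key step lemma
  have hstep : ∀ u, u ≠ s → d u ≠ ⊤ →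
      ∃ x, Adj x u ∧ d u = d x + weight x u ∧ d x < d u := by
    intro u hus hut
    have hreach : Relation.ReflTransGen Adj s u := by
      by_contra h; exact hut (hinf u h)
    have hfixu := hfix u hus hreach
    set S := {y | ∃ x, Adj x u ∧ y = d x + weight x u} with hS
    have hSfin : S.Finite := by
      have : S ⊆ (fun x => d x + weight x u) '' Set.univ := by
        rintro y ⟨x, _, rfl⟩; exact ⟨x, trivial, rfl⟩
      exact (Set.finite_univ.image _).subset this
    have hSne : S.Nonempty := by
      by_contra h
      rw [Set.not_nonempty_iff_eq_empty] at h
      rw [h, sInf_empty] at hfixu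
      exact hut hfixu
    have hmem : sInf S ∈ S := hSne.csInf_mem hSfin
    rw [← hfixu] at hmem
    obtain ⟨x, hadj, hx⟩ := hmem
    refine ⟨x, hadj, hx, ?_⟩
    have hxt : d x ≠ ⊤ := by
      intro h; rw [h] at hx; simp at hx; exact hut hx
    have hw0 := (hw x u hadj).1
    rw [hx]
    exact ENNReal.lt_add_right hxt (ne_of_gt hw0)
  -- Lemma B: sInf (W u) ≤ d u, by strong induction on the card of smaller values
  have lemB : ∀ (n : ℕ) (u : V),
      (Finset.univ.filter (fun v => d v < d u)).card ≤ n → sInf (W u) ≤ d u := by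
    intro n
    induction n with
    | zero =>
      intro u hcard
      by_cases hut : d u = ⊤
      · simp [hut]
      by_cases hus : u = s
      · rw [hus, hds]
        exact sInf_le ⟨[], List.isChain_singleton s, rfl, (dwalkWeight_nil weight s).symm⟩
      obtain ⟨x, hadj, hx, hlt⟩ := hstep u hus hut
      have : x ∈ Finset.univ.filter (fun v => d v < d u) := by simp [hlt]
      rw [Finset.card_eq_zero.mp (Nat.le_zero.mp hcard)] at this
      simp at this
    | succ n ih =>
      intro u hcard
      by_cases hut : d u = ⊤
      · simp [hut]
      by_cases hus : u = s
      · rw [hus, hds]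
        exact sInf_le ⟨[], List.isChain_singleton s, rfl, (dwalkWeight_nil weight s).symm⟩
      obtain ⟨x, hadj, hx, hlt⟩ := hstep u hus hut
      have hsub : Finset.univ.filter (fun v => d v < d x) ⊂
          Finset.univ.filter (fun v => d v < d u) := by
        refine Finset.ssubset_iff_of_subset ?_ |>.mpr ⟨x, by simp [hlt], by simp⟩
        intro v hv
        simp only [Finset.mem_filter, Finset.mem_univ, true_and] at hv ⊢
        exact hv.trans hlt
      have hcx : (Finset.univ.filter (fun v => d v < d x)).card ≤ n := by
        have := Finset.card_lt_card hsub
        omega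
      have hBx : sInf (W x) ≤ d x := ih x hcx
      have hxt : d x ≠ ⊤ := hlt.ne_top
      -- bound via ε
      refine ENNReal.le_of_forall_pos_le_add ?_
      intro ε hε _
      have hlt' : sInf (W x) < d x + ε := lt_of_le_of_lt hBx
        (ENNReal.lt_add_right hxt (by exact_mod_cast hε.ne'))
      obtain ⟨y, hyW, hy⟩ := sInf_lt_iff.mp hlt'
      obtain ⟨l, hc, hlast, rfl⟩ := hyW
      -- extend the walk by u
      have hcu : List.Chain' Adj (s :: (l ++ [u])) := by
        rw [← List.cons_append]
        refine List.isChain_append.mpr ⟨hc, List.isChain_singleton u, ?_⟩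
        intro p hp q hq
        simp only [List.getLast?_eq_getLast (List.cons_ne_nil s l), Option.mem_def,
          Option.some.injEq] at hp
        simp only [List.head?_cons, Option.mem_def, Option.some.injEq] at hq
        rw [← hp, ← hq] at *
        rw [hlast]; exact hadj
      have hlastu : ((s :: (l ++ [u])).getLast (List.cons_ne_nil s _)) = u := by
        simp [List.getLast_append]
      have hmemu : dwalkWeight weight s (l ++ [u]) ∈ W u := ⟨l ++ [u], hcu, hlastu, rfl⟩
      calc sInf (W u) ≤ dwalkWeight weight s (l ++ [u]) := sInf_le hmemu
        _ = dwalkWeight weight s l + weight ((s :: l).getLast (List.cons_ne_nil s l)) u := by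
            rw [dwalkWeight_append_single]
        _ = dwalkWeight weight s l + weight x u := by rw [hlast]
        _ ≤ (d x + ε) + weight x u := add_le_add_left (le_of_lt hy) _
        _ = (d x + weight x u) + ε := by ring
        _ = d u + ε := by rw [← hx]
  intro u
  refine le_antisymm ?_ (lemB (Finset.univ.filter (fun v => d v < d u)).card u le_rfl)
  refine le_sInf ?_
  rintro y ⟨l, hc, hlast, rfl⟩
  have := lemA l s Relation.ReflTransGen.refl hc
  rw [hlast, hds, zero_add] at this
  exact this
end

section
/- With strictly positive edge weights, the global relaxation fixed point of the previous context exists and is unique: there is exactly one function w : V → ℝ≥0 ∪ {∞} with w(s) = 0, w(u) = min over in-neighbors x of (w(x) + weight(x,u)) for u ≠ s reachable from s, and w(u) = ∞ for u unreachable from s. -/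
section Aux

variable {V : Type*} (Adj : V → V → Prop) (weight : V → V → ENNReal) (s : V)

/-- Costs of walks from `s`. -/
inductive Reach : V → ENNReal → Prop
  | refl : Reach s 0
  | tail {x u : V} {c : ENNReal} : Reach x c → Adj x u → Reach u (c + weight x u)

/-- Shortest-path distance. -/
noncomputable def delta (u : V) : ENNReal := sInf {c | Reach Adj weight s u c}

variable {Adj weight s}

lemma Reach.rtg {u : V} {c : ENNReal} (h : Reach Adj weight s u c) :
    Relation.ReflTransGen Adj s u := by
  induction h with
  | refl => exact .refl
  | tail _ ha ih => exact ih.tail ha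

lemma delta_s : delta Adj weight s s = 0 :=
  le_antisymm (sInf_le Reach.refl) zero_le

lemma delta_top {u : V} (h : ¬ Relation.ReflTransGen Adj s u) :
    delta Adj weight s u = ⊤ :=
  eq_top_iff.2 (le_sInf fun _ hc => absurd (Reach.rtg hc) h)

lemma delta_le_adj {x u : V} (h : Adj x u) :
    delta Adj weight s u ≤ delta Adj weight s x + weight x u := by
  rw [delta, delta, ENNReal.sInf_add]
  exact le_iInf₂ fun c hc => sInf_le (hc.tail h)

lemma delta_fix {u : V} (hus : u ≠ s) (hr : Relation.ReflTransGen Adj s u) :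
    delta Adj weight s u = sInf {y | ∃ x, Adj x u ∧ y = delta Adj weight s x + weight x u} := by
  apply le_antisymm
  · exact le_sInf fun y ⟨x, hx, hy⟩ => hy ▸ delta_le_adj hx
  · refine le_sInf fun c hc => ?_
    cases hc with
    | refl => exact absurd rfl hus
    | tail hr' ha =>
      exact le_trans (sInf_le ⟨_, ha, rfl⟩) (add_le_add_left (sInf_le hr') _)

lemma le_delta_of_fix (d : V → ENNReal) (h0 : d s = 0)
    (hfix : ∀ u, u ≠ s → Relation.ReflTransGen Adj s u →
      d u = sInf {y | ∃ x, Adj x u ∧ y = d x + weight x u})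
    {u : V} {c : ENNReal} (hc : Reach Adj weight s u c) : d u ≤ c := by
  induction hc with
  | refl => exact h0.le
  | @tail x u c hr ha ih =>
    by_cases hus : u = s
    · subst hus; simp [h0]
    · rw [hfix u hus (hr.rtg.tail ha)]
      exact le_trans (sInf_le ⟨x, ha, rfl⟩) (add_le_add_left ih _)

end Aux

/-- Existence and uniqueness of the global relaxation fixed point: in a finite
directed graph with strictly positive edge weights and source `s`, there is
exactly one function `d : V → ℝ≥0∞` with `d s = 0`, satisfying the relaxation
fixed-point equation at every reachable `u ≠ s`, and `d u = ⊤` at every vertex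
unreachable from `s`. -/
theorem relaxation_fixed_point_exists_unique
    {V : Type*} [Fintype V] (Adj : V → V → Prop) (weight : V → V → ENNReal)
    (hw : ∀ a b, Adj a b → 0 < weight a b ∧ weight a b ≠ ⊤)
    (s : V) :
    ∃! d : V → ENNReal,
      d s = 0 ∧
      (∀ u, u ≠ s → Relation.ReflTransGen Adj s u →
        d u = sInf {y | ∃ x, Adj x u ∧ y = d x + weight x u}) ∧
      (∀ u, ¬ Relation.ReflTransGen Adj s u → d u = ⊤) := by
  classical
  refine ⟨delta Adj weight s, ⟨delta_s, fun u hus hr => delta_fix hus hr,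
    fun u h => delta_top h⟩, ?_⟩
  rintro d ⟨h0, hfix, hinf⟩
  funext u
  -- d ≤ delta everywhere
  have hle : ∀ v, d v ≤ delta Adj weight s v :=
    fun v => le_sInf fun c hc => le_delta_of_fix d h0 hfix hc
  -- delta ≤ d everywhere, by a minimal-counterexample argument
  have hge : ∀ v, delta Adj weight s v ≤ d v := by
    by_contra h
    push_neg at h
    obtain ⟨u0, hu0⟩ := h
    have hne : (Finset.univ.filter (fun v => d v < delta Adj weight s v)).Nonempty :=
      ⟨u0, by simp [hu0]⟩
    obtain ⟨u, hu, hmin⟩ := Finset.exists_min_image _ d hne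
    simp only [Finset.mem_filter, Finset.mem_univ, true_and] at hu
    have hdu_top : d u < ⊤ := lt_of_lt_of_le hu le_top
    have hus : u ≠ s := by
      rintro rfl
      rw [h0, delta_s] at hu
      exact lt_irrefl _ hu
    have hr : Relation.ReflTransGen Adj s u := by
      by_contra hnr
      rw [hinf u hnr] at hdu_top
      exact lt_irrefl _ hdu_top
    have hdu : d u = sInf {y | ∃ x, Adj x u ∧ y = d x + weight x u} := hfix u hus hr
    set S : Set ENNReal := {y | ∃ x, Adj x u ∧ y = d x + weight x u} with hS
    have hSfin : S.Finite := by
      have : S = (fun x => d x + weight x u) '' {x | Adj x u} := by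
        ext y; simp [hS, Set.mem_image, eq_comm]
      rw [this]
      exact (Set.toFinite _).image _
    have hSne : S.Nonempty := by
      rcases S.eq_empty_or_nonempty with he | hne'
      · rw [hdu, he, sInf_empty] at hdu_top
        exact absurd hdu_top (lt_irrefl _)
      · exact hne'
    obtain ⟨x, hx, heq⟩ := hSne.csInf_mem hSfin
    rw [← hdu] at heq
    have hwx := hw x u hx
    have hdx_top : d x ≠ ⊤ := by
      intro ht
      rw [heq, ht, top_add] at hdu_top
      exact lt_irrefl _ hdu_top
    have hdx_lt : d x < d u := by
      rw [heq]
      exact ENNReal.lt_add_right hdx_top hwx.1.ne'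
    have hxS : ¬ d x < delta Adj weight s x := by
      intro hxlt
      have : d u ≤ d x := hmin x (by simp [hxlt])
      exact absurd (lt_of_lt_of_le hdx_lt this) (lt_irrefl _)
    push_neg at hxS
    have : delta Adj weight s u ≤ d u := by
      calc delta Adj weight s u ≤ delta Adj weight s x + weight x u := delta_le_adj hx
        _ ≤ d x + weight x u := add_le_add_left hxS _
        _ = d u := heq.symm
    exact absurd (lt_of_lt_of_le hu this) (lt_irrefl _)
  exact le_antisymm (hle u) (hge u)
end
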